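/- Let N > 2 be an integer, 1 < p < N, and k < (N-p)/(1-p) (so that k·(k - (N-p)/(1-p)) > 0). Set c = √(k·(k - (N-p)/(1-p))). Let 0 < b ≤ π/2 and suppose H : [0, b) → ℝ is differentiable with H(0) = 0, satisfies the H-equation on (0, b), and H(x) ≤ 0 and H'(x) < 0 for all x ∈ (0, b). Then for every x ∈ [0, b) with p·c·x < π/2, one has H(x) ≥ -c·tan(p·c·x). -/

import Mathlib

noncomputable section
open Real Set Filter Topology

/-- `H` satisfies the first-order H-equation (for parameters `p`, `N`, `k`) on the set `I`:
`((p-1)H² + k²)H' = (1-p)(H² + k²)² + (H² + k²)(k(p-N) + (2-N)·H·cot x)`. -/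
def HEqOn (p : ℝ) (N : ℕ) (k : ℝ) (H : ℝ → ℝ) (I : Set ℝ) : Prop :=
  ∀ x ∈ I,
    ((p - 1) * (H x) ^ 2 + k ^ 2) * deriv H x =
      (1 - p) * ((H x) ^ 2 + k ^ 2) ^ 2
        + ((H x) ^ 2 + k ^ 2) * (k * (p - (N : ℝ)) + (2 - (N : ℝ)) * H x * Real.cot x)

set_option maxHeartbeats 1000000 in
/-- Lower tangent bound: with `c = √(k(k - (N-p)/(1-p)))`, a nonpositive decreasing
solution of the H-equation with `H(0)=0` satisfies `H(x) ≥ -c·tan(p·c·x)` as long as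
`p·c·x < π/2`. -/
theorem H_tangent_lower_bound (N : ℕ) (hN : 2 < N) (p : ℝ) (hp1 : 1 < p)
    (hpN : p < (N : ℝ)) (k : ℝ) (hk : k < ((N : ℝ) - p) / (1 - p))
    (b : ℝ) (hb0 : 0 < b) (hb : b ≤ π / 2)
    (H : ℝ → ℝ)
    (hd : ∀ x ∈ Ico (0 : ℝ) b, DifferentiableWithinAt ℝ H (Ici 0) x)
    (hH0 : H 0 = 0)
    (heq : HEqOn p N k H (Ioo 0 b))
    (hneg : ∀ x ∈ Ioo (0 : ℝ) b, H x ≤ 0 ∧ deriv H x < 0) :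
    ∀ x ∈ Ico (0 : ℝ) b,
      p * Real.sqrt (k * (k - ((N : ℝ) - p) / (1 - p))) * x < π / 2 →
      -Real.sqrt (k * (k - ((N : ℝ) - p) / (1 - p))) *
          Real.tan (p * Real.sqrt (k * (k - ((N : ℝ) - p) / (1 - p))) * x) ≤ H x := by
  set m : ℝ := ((N : ℝ) - p) / (1 - p) with hm_def
  have hp0 : (0 : ℝ) < p - 1 := by linarith
  have hm_neg : m < 0 := div_neg_of_pos_of_neg (by linarith) (by linarith)
  have hk_neg : k < 0 := lt_trans hk hm_neg
  have hk2 : (0 : ℝ) < k ^ 2 := by nlinarith [mul_pos_of_neg_of_neg hk_neg hk_neg]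
  have harg : 0 < k * (k - m) := mul_pos_of_neg_of_neg hk_neg (by linarith)
  set c : ℝ := Real.sqrt (k * (k - m)) with hc_def
  have hc_pos : 0 < c := Real.sqrt_pos.mpr harg
  have hc2 : c ^ 2 = k * (k - m) := Real.sq_sqrt harg.le
  have hkpN : k * (p - (N : ℝ)) = (p - 1) * (k ^ 2 - c ^ 2) := by
    rw [hc2, hm_def]
    have h1p : (1 : ℝ) - p ≠ 0 := by linarith
    field_simp
    ring
  -- Key differential inequality : H' ≥ -p (H² + c²) on (0, b)
  have hkey : ∀ y ∈ Ioo (0 : ℝ) b, -(p * ((H y) ^ 2 + c ^ 2)) ≤ deriv H y := by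
    intro y hy
    obtain ⟨hy0, hyb⟩ := hy
    have hHy : H y ≤ 0 := (hneg y ⟨hy0, hyb⟩).1
    have hcot : 0 ≤ Real.cot y := by
      rw [Real.cot_eq_cos_div_sin]
      apply div_nonneg
      · exact Real.cos_nonneg_of_mem_Icc ⟨by linarith [Real.pi_pos], by linarith⟩
      · exact (Real.sin_pos_of_pos_of_lt_pi hy0 (by linarith [Real.pi_pos])).le
    have heqy := heq y ⟨hy0, hyb⟩
    set s : ℝ := (H y) ^ 2 with hs_def
    have hs : 0 ≤ s := sq_nonneg _
    have hD : 0 < (p - 1) * s + k ^ 2 := by nlinarith [mul_nonneg hp0.le hs]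
    have hcotterm : 0 ≤ (s + k ^ 2) * ((2 - (N : ℝ)) * H y * Real.cot y) := by
      apply mul_nonneg (by positivity)
      apply mul_nonneg _ hcot
      have h2N : (2 : ℝ) - (N : ℝ) ≤ 0 := by
        have : (2 : ℝ) ≤ (N : ℝ) := by exact_mod_cast hN.le
        linarith
      nlinarith [h2N, hHy]
    have h3 : (1 - p) * (s + k ^ 2) ^ 2 + (s + k ^ 2) * (k * (p - (N : ℝ)))
        ≤ ((p - 1) * s + k ^ 2) * deriv H y := by
      have expand : (s + k ^ 2) * (k * (p - (N : ℝ)) + (2 - (N : ℝ)) * H y * Real.cot y)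
          = (s + k ^ 2) * (k * (p - (N : ℝ)))
            + (s + k ^ 2) * ((2 - (N : ℝ)) * H y * Real.cot y) := by ring
      rw [expand] at heqy
      linarith
    have h4 : -(p * (s + c ^ 2)) * ((p - 1) * s + k ^ 2)
        ≤ (1 - p) * (s + k ^ 2) ^ 2 + (s + k ^ 2) * (k * (p - (N : ℝ))) := by
      have hid : (1 - p) * (s + k ^ 2) ^ 2 + (s + k ^ 2) * ((p - 1) * (k ^ 2 - c ^ 2))
          = -(p * (s + c ^ 2)) * ((p - 1) * s + k ^ 2)
            + (s + c ^ 2) * ((p - 1) ^ 2 * s + k ^ 2) := by ring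
      have hnn : 0 ≤ (s + c ^ 2) * ((p - 1) ^ 2 * s + k ^ 2) := by positivity
      rw [hkpN]
      linarith
    have h5 : -(p * (s + c ^ 2)) * ((p - 1) * s + k ^ 2)
        ≤ deriv H y * ((p - 1) * s + k ^ 2) := by
      have hcomm : ((p - 1) * s + k ^ 2) * deriv H y
          = deriv H y * ((p - 1) * s + k ^ 2) := by ring
      linarith [h3, h4]
    exact le_of_mul_le_mul_right h5 hD
  -- Monotonicity of g(y) = arctan(H y / c) + p c y
  intro x hx hθ
  obtain ⟨hx0, hxb⟩ := hx
  rcases eq_or_lt_of_le hx0 with hx0' | hx0'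
  · rw [← hx0']
    simp [hH0]
  set g : ℝ → ℝ := fun y => Real.arctan (H y / c) + p * c * y with hg_def
  have hHcont : ContinuousOn H (Icc 0 x) := by
    intro y hy
    have hyIci : ContinuousWithinAt H (Ici 0) y := by
      rcases eq_or_lt_of_le hy.1 with h0 | h0
      · rw [← h0]
        exact (hd 0 ⟨le_refl 0, hb0⟩).continuousWithinAt
      · exact ((hd y ⟨hy.1, lt_of_le_of_lt hy.2 hxb⟩).differentiableAt
          (mem_of_superset (Ioi_mem_nhds h0) Ioi_subset_Ici_self)).continuousAt.continuousWithinAt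
    exact hyIci.mono (Icc_subset_Ici_self)
  have hgcont : ContinuousOn g (Icc 0 x) := by
    apply ContinuousOn.add
    · exact Real.continuous_arctan.comp_continuousOn (hHcont.div_const c)
    · exact (continuous_const.mul continuous_id).continuousOn
  have hderiv : ∀ y ∈ Ioo (0 : ℝ) x,
      HasDerivAt g (1 / (1 + (H y / c) ^ 2) * (deriv H y / c) + p * c) y := by
    intro y hy
    have hdy : DifferentiableAt ℝ H y :=
      (hd y ⟨hy.1.le, lt_trans hy.2 hxb⟩).differentiableAt
        (mem_of_superset (Ioi_mem_nhds hy.1) Ioi_subset_Ici_self)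
    have h1 : HasDerivAt (fun z => H z / c) (deriv H y / c) y :=
      hdy.hasDerivAt.div_const c
    have h2 : HasDerivAt (fun z => Real.arctan (H z / c))
        (1 / (1 + (H y / c) ^ 2) * (deriv H y / c)) y :=
      by have := (Real.hasDerivAt_arctan (H y / c)).comp y h1; exact this
    have h3 : HasDerivAt (fun z => p * c * z) (p * c) y := by
      simpa using (hasDerivAt_id y).const_mul (p * c)
    exact h2.add h3
  have hmono : MonotoneOn g (Icc 0 x) := by
    apply monotoneOn_of_deriv_nonneg (convex_Icc 0 x) hgcont
    · intro y hy
      rw [interior_Icc] at hy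
      exact ((hderiv y hy).differentiableAt).differentiableWithinAt
    · intro y hy
      rw [interior_Icc] at hy
      rw [(hderiv y hy).deriv]
      have hkb := hkey y ⟨hy.1, lt_trans hy.2 hxb⟩
      have hden : (0 : ℝ) < 1 + (H y / c) ^ 2 := by positivity
      have hnum : 0 ≤ deriv H y / c + p * c * (1 + (H y / c) ^ 2) := by
        have hrw : deriv H y / c + p * c * (1 + (H y / c) ^ 2)
            = (deriv H y + p * ((H y) ^ 2 + c ^ 2)) / c := by
          field_simp
          ring
        rw [hrw]
        apply div_nonneg _ hc_pos.le
        linarith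
      have hrw2 : 1 / (1 + (H y / c) ^ 2) * (deriv H y / c) + p * c
          = (deriv H y / c + p * c * (1 + (H y / c) ^ 2)) / (1 + (H y / c) ^ 2) := by
        field_simp
      rw [hrw2]
      exact div_nonneg hnum hden.le
  have hgle : g 0 ≤ g x :=
    hmono ⟨le_refl 0, hx0⟩ ⟨hx0, le_refl x⟩ hx0
  have hg0 : g 0 = 0 := by
    show Real.arctan (H 0 / c) + p * c * 0 = 0
    rw [hH0, zero_div, Real.arctan_zero, mul_zero, add_zero]
  have harctan : -(p * c * x) ≤ Real.arctan (H x / c) := by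
    have : g x = Real.arctan (H x / c) + p * c * x := rfl
    rw [hg0] at hgle
    rw [this] at hgle
    linarith
  -- convert back through tan
  have hθ0 : 0 ≤ p * c * x := by positivity
  have hmem1 : -(p * c * x) ∈ Ioo (-(π / 2)) (π / 2) :=
    ⟨by linarith, by linarith [Real.pi_pos]⟩
  have hmem2 : Real.arctan (H x / c) ∈ Ioo (-(π / 2)) (π / 2) :=
    ⟨Real.neg_pi_div_two_lt_arctan _, Real.arctan_lt_pi_div_two _⟩
  have htan : Real.tan (-(p * c * x)) ≤ Real.tan (Real.arctan (H x / c)) :=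
    Real.strictMonoOn_tan.monotoneOn hmem1 hmem2 harctan
  rw [Real.tan_arctan, Real.tan_neg] at htan
  have hfin : -Real.tan (p * c * x) * c ≤ H x := (le_div_iff₀ hc_pos).mp htan
  have : -c * Real.tan (p * c * x) = -Real.tan (p * c * x) * c := by ring
  rw [this]
  exact hfin
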